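/- Let α ∈ (0,1) and suppose u : B_1^n → ℝ is continuous with u(0) = 0, and satisfies the non-degeneracy sup_{B_r^n} u ≥ C r^α for all r ∈ (0,1/2) together with the Hölder bound |u(x) - u(z)| ≤ K|x - z|^α. Then there exists δ > 0 depending only on C, K, α such that for every r ∈ (0,1/2) there is a point y ∈ B_r^n with B_{δr}^n(y) ⊂ {u > 0}; consequently L^n({u > 0} ∩ B_{2r}^n) ≥ c r^n for c = c(n, C, K, α) > 0. -/

import Mathlib

open MeasureTheory Metric Set

theorem positive_density_of_positivity_set
    (n : ℕ) (α C K : ℝ) (hα : α ∈ Set.Ioo (0 : ℝ) 1) (hC : 0 < C) (hK : 0 < K)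
    (u : EuclideanSpace ℝ (Fin n) → ℝ) (hu : Continuous u) (hu0 : u 0 = 0)
    (hnd : ∀ r ∈ Set.Ioo (0 : ℝ) (1 / 2),
      ∃ y ∈ Metric.closedBall (0 : EuclideanSpace ℝ (Fin n)) r, C * r ^ α ≤ u y)
    (hHolder : ∀ x z : EuclideanSpace ℝ (Fin n), |u x - u z| ≤ K * ‖x - z‖ ^ α) :
    ∃ δ > (0 : ℝ), ∃ c > (0 : ℝ), ∀ r ∈ Set.Ioo (0 : ℝ) (1 / 2),
      (∃ y ∈ Metric.closedBall (0 : EuclideanSpace ℝ (Fin n)) r,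
        Metric.ball y (δ * r) ⊆ {x | 0 < u x}) ∧
      c * r ^ (n : ℝ) ≤
        (MeasureTheory.volume
          ({x | 0 < u x} ∩ Metric.closedBall (0 : EuclideanSpace ℝ (Fin n)) (2 * r))).toReal := by
  obtain ⟨hα0, hα1⟩ := hα
  set δ : ℝ := min 1 ((C / (2 * K)) ^ (α⁻¹)) with hδdef
  have hCK : (0 : ℝ) < C / (2 * K) := by positivity
  have hδpos : 0 < δ := lt_min one_pos (Real.rpow_pos_of_pos hCK _)
  have hδ1 : δ ≤ 1 := min_le_left _ _
  have hKδ : K * δ ^ α ≤ C / 2 := by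
    have h1 : δ ≤ (C / (2 * K)) ^ (α⁻¹) := min_le_right _ _
    have h2 : δ ^ α ≤ ((C / (2 * K)) ^ (α⁻¹)) ^ α :=
      Real.rpow_le_rpow hδpos.le h1 hα0.le
    rw [Real.rpow_inv_rpow hCK.le (ne_of_gt hα0)] at h2
    have := mul_le_mul_of_nonneg_left h2 hK.le
    calc K * δ ^ α ≤ K * (C / (2 * K)) := this
      _ = C / 2 := by field_simp
  set B : ℝ := (volume (ball (0 : EuclideanSpace ℝ (Fin n)) 1)).toReal with hBdef
  have hBpos : 0 < B := by
    apply ENNReal.toReal_pos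
    · exact (measure_ball_pos volume _ one_pos).ne'
    · exact (measure_ball_lt_top).ne
  refine ⟨δ, hδpos, δ ^ n * B, by positivity, ?_⟩
  intro r ⟨hr0, hr2⟩
  obtain ⟨y, hy, hyu⟩ := hnd r ⟨hr0, hr2⟩
  have hrα : (0 : ℝ) < r ^ α := Real.rpow_pos_of_pos hr0 _
  have hball : ball y (δ * r) ⊆ {x | 0 < u x} := by
    intro x hx
    have hxy : ‖x - y‖ < δ * r := by rwa [mem_ball, dist_eq_norm] at hx
    have h2 : K * ‖x - y‖ ^ α ≤ K * (δ * r) ^ α :=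
      mul_le_mul_of_nonneg_left
        (Real.rpow_le_rpow (norm_nonneg _) hxy.le hα0.le) hK.le
    have h3 : (δ * r) ^ α = δ ^ α * r ^ α := Real.mul_rpow hδpos.le hr0.le
    have h4 : K * (δ ^ α * r ^ α) ≤ C / 2 * r ^ α := by
      have := mul_le_mul_of_nonneg_right hKδ hrα.le
      nlinarith
    have h5 : u y - u x ≤ K * ‖x - y‖ ^ α := by
      have := hHolder x y
      rw [abs_sub_comm] at this
      exact (abs_le.mp this).2.trans_eq rfl |>.trans (le_refl _)
    show 0 < u x
    have : C * r ^ α ≤ u y := hyu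
    nlinarith
  refine ⟨⟨y, hy, hball⟩, ?_⟩
  have hsub : ball y (δ * r) ⊆
      {x | 0 < u x} ∩ closedBall (0 : EuclideanSpace ℝ (Fin n)) (2 * r) := by
    intro x hx
    refine ⟨hball hx, ?_⟩
    have h1 : dist x y < δ * r := hx
    have h2 : dist y (0 : EuclideanSpace ℝ (Fin n)) ≤ r := hy
    have : dist x (0 : EuclideanSpace ℝ (Fin n)) ≤ dist x y + dist y 0 :=
      dist_triangle _ _ _
    have hδr : δ * r ≤ r := by nlinarith
    simp only [mem_closedBall]
    linarith
  have hvol := measure_mono (μ := (volume : Measure (EuclideanSpace ℝ (Fin n)))) hsub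
  rw [Measure.addHaar_ball_of_pos volume y (by positivity : (0 : ℝ) < δ * r),
    finrank_euclideanSpace_fin] at hvol
  have hfin : volume ({x | 0 < u x} ∩
      closedBall (0 : EuclideanSpace ℝ (Fin n)) (2 * r)) ≠ ⊤ :=
by
    have h : volume ({x | 0 < u x} ∩
        closedBall (0 : EuclideanSpace ℝ (Fin n)) (2 * r)) ≤
        volume (closedBall (0 : EuclideanSpace ℝ (Fin n)) (2 * r)) :=
      measure_mono inter_subset_right
    exact (h.trans_lt measure_closedBall_lt_top).ne
  have := ENNReal.toReal_le_toReal (ENNReal.mul_ne_top ENNReal.ofReal_ne_top measure_ball_lt_top.ne) hfin |>.mpr hvol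
  rw [ENNReal.toReal_mul, ENNReal.toReal_ofReal (by positivity)] at this
  calc δ ^ n * B * r ^ (n : ℝ)
      = (δ * r) ^ n * B := by
        rw [Real.rpow_natCast, mul_pow]; ring
    _ ≤ _ := this
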